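/- The number of subgroups of the group Z_m × Z_n equals the sum over all divisors i of m and j of n of gcd(i, j). -/

import Mathlib

open AddSubgroup

section goursat
variable {M N : Type*} [AddCommGroup M] [AddCommGroup N]

/-- The subgroup of `M × N` built from subgroups `A ≤ M`, `B ≤ N` and a hom `φ : A →+ N ⧸ B`. -/
def mkH (A : AddSubgroup M) (B : AddSubgroup N) (φ : A →+ N ⧸ B) : AddSubgroup (M × N) where
  carrier := {p | ∃ h : p.1 ∈ A, (QuotientAddGroup.mk p.2 : N ⧸ B) = φ ⟨p.1, h⟩}
  zero_mem' := ⟨A.zero_mem, by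
    show (QuotientAddGroup.mk (0 : N) : N ⧸ B) = φ 0
    rw [map_zero, QuotientAddGroup.mk_zero]⟩
  add_mem' := by
    rintro ⟨x1, y1⟩ ⟨x2, y2⟩ ⟨h1, e1⟩ ⟨h2, e2⟩
    refine ⟨A.add_mem h1 h2, ?_⟩
    show (QuotientAddGroup.mk (y1 + y2) : N ⧸ B) = φ (⟨x1, h1⟩ + ⟨x2, h2⟩)
    rw [map_add, ← e1, ← e2, QuotientAddGroup.mk_add]
  neg_mem' := by
    rintro ⟨x, y⟩ ⟨h, e⟩
    refine ⟨A.neg_mem h, ?_⟩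
    show (QuotientAddGroup.mk (-y) : N ⧸ B) = φ (-⟨x, h⟩)
    rw [map_neg, ← e, QuotientAddGroup.mk_neg]

lemma mem_mkH {A : AddSubgroup M} {B : AddSubgroup N} {φ : A →+ N ⧸ B} {p : M × N} :
    p ∈ mkH A B φ ↔ ∃ h : p.1 ∈ A, (QuotientAddGroup.mk p.2 : N ⧸ B) = φ ⟨p.1, h⟩ := Iff.rfl

lemma mkH_map_fst (A : AddSubgroup M) (B : AddSubgroup N) (φ : A →+ N ⧸ B) :
    (mkH A B φ).map (AddMonoidHom.fst M N) = A := by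
  ext x
  simp only [AddSubgroup.mem_map]
  constructor
  · rintro ⟨⟨x', y⟩, ⟨h, -⟩, rfl⟩; exact h
  · intro hx
    obtain ⟨y, hy⟩ := QuotientAddGroup.mk_surjective (φ ⟨x, hx⟩)
    exact ⟨(x, y), ⟨hx, hy⟩, rfl⟩

lemma mkH_comap_inr (A : AddSubgroup M) (B : AddSubgroup N) (φ : A →+ N ⧸ B) :
    (mkH A B φ).comap (AddMonoidHom.inr M N) = B := by
  have h0 : φ (⟨0, A.zero_mem⟩ : A) = 0 := map_zero φ
  ext y
  simp only [AddSubgroup.mem_comap, AddMonoidHom.inr_apply, mem_mkH]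
  constructor
  · rintro ⟨h, e⟩
    rw [show (⟨0, h⟩ : A) = ⟨0, A.zero_mem⟩ from rfl, h0] at e
    exact (QuotientAddGroup.eq_zero_iff y).mp e
  · intro hy
    exact ⟨A.zero_mem, by rw [(QuotientAddGroup.eq_zero_iff y).mpr hy, h0]⟩

lemma exists_pair (H : AddSubgroup (M × N)) {x : M}
    (hx : x ∈ H.map (AddMonoidHom.fst M N)) : ∃ y, (x, y) ∈ H := by
  obtain ⟨p, hp, he⟩ := AddSubgroup.mem_map.1 hx
  exact ⟨p.2, by rwa [show (x, p.2) = p from Prod.ext he.symm rfl]⟩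

lemma mk_key (H : AddSubgroup (M × N)) {x : M} {y1 y2 : N} (h1 : (x, y1) ∈ H)
    (h2 : (x, y2) ∈ H) :
    (QuotientAddGroup.mk y1 : N ⧸ H.comap (AddMonoidHom.inr M N)) = QuotientAddGroup.mk y2 := by
  rw [QuotientAddGroup.eq]
  have := H.add_mem (H.neg_mem h1) h2
  simpa using this

/-- The hom `A →+ N ⧸ B` recovered from a subgroup of `M × N`. -/
noncomputable def mkPhi (H : AddSubgroup (M × N)) :
    (H.map (AddMonoidHom.fst M N)) →+ (N ⧸ H.comap (AddMonoidHom.inr M N)) where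
  toFun a := QuotientAddGroup.mk (exists_pair H a.2).choose
  map_zero' := by
    have hc := (exists_pair H (0 : ↥(H.map (AddMonoidHom.fst M N))).2).choose_spec
    have h0 : (((0 : ↥(H.map (AddMonoidHom.fst M N))) : M), (0 : N)) ∈ H := H.zero_mem
    exact (mk_key H hc h0).trans (QuotientAddGroup.mk_zero _)
  map_add' := by
    intro a b
    have ha := (exists_pair H a.2).choose_spec
    have hb := (exists_pair H b.2).choose_spec
    have hab := (exists_pair H (a + b).2).choose_spec
    have hsum : ((↑(a + b) : M), (exists_pair H a.2).choose + (exists_pair H b.2).choose) ∈ H := by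
      have := H.add_mem ha hb
      exact this
    exact (mk_key H hab hsum).trans (QuotientAddGroup.mk_add _ _ _)

lemma mkPhi_spec (H : AddSubgroup (M × N)) {x : M} {y : N} (hxy : (x, y) ∈ H)
    (h : x ∈ H.map (AddMonoidHom.fst M N)) :
    mkPhi H ⟨x, h⟩ = QuotientAddGroup.mk y := by
  have := mk_key H (exists_pair H h).choose_spec hxy
  simpa [mkPhi] using this

lemma mkH_mkPhi (H : AddSubgroup (M × N)) :
    mkH (H.map (AddMonoidHom.fst M N)) (H.comap (AddMonoidHom.inr M N)) (mkPhi H) = H := by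
  ext ⟨x, y⟩
  rw [mem_mkH]
  constructor
  · rintro ⟨h, e⟩
    obtain ⟨y₀, hy₀⟩ := exists_pair H h
    have : mkPhi H ⟨x, h⟩ = QuotientAddGroup.mk y₀ := mkPhi_spec H hy₀ h
    rw [this] at e
    have hyB : -y₀ + y ∈ H.comap (AddMonoidHom.inr M N) := (QuotientAddGroup.eq).mp e.symm
    have := H.add_mem hy₀ hyB
    simpa using this
  · intro hxy
    have h : x ∈ H.map (AddMonoidHom.fst M N) := AddSubgroup.mem_map.mpr ⟨(x, y), hxy, rfl⟩
    exact ⟨h, (mkPhi_spec H hxy h).symm⟩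

lemma mkH_bijective :
    Function.Bijective
      (fun t : Σ (A : AddSubgroup M) (B : AddSubgroup N), (A →+ N ⧸ B) => mkH t.1 t.2.1 t.2.2) := by
  constructor
  · rintro ⟨A1, B1, φ1⟩ ⟨A2, B2, φ2⟩ h
    simp only at h
    obtain rfl : A1 = A2 := by rw [← mkH_map_fst A1 B1 φ1, ← mkH_map_fst A2 B2 φ2, h]
    obtain rfl : B1 = B2 := by rw [← mkH_comap_inr A1 B1 φ1, ← mkH_comap_inr A1 B2 φ2, h]
    suffices hφ : φ1 = φ2 by rw [hφ]
    ext a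
    obtain ⟨y, hy⟩ := QuotientAddGroup.mk_surjective (φ1 a)
    have h1 : ((a : M), y) ∈ mkH A1 B1 φ1 := ⟨a.2, by rw [hy]⟩
    rw [h] at h1
    obtain ⟨h', e⟩ := h1
    rw [← hy, e]
  · intro H
    exact ⟨⟨H.map (AddMonoidHom.fst M N), H.comap (AddMonoidHom.inr M N), mkPhi H⟩, mkH_mkPhi H⟩

end goursat

open AddSubgroup

instance addMonoidHomFinite {X Y : Type*} [AddZeroClass X] [AddZeroClass Y] [Finite X] [Finite Y] :
    Finite (X →+ Y) :=
  Finite.of_injective _ DFunLike.coe_injective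

instance quotCyclic (n : ℕ) (B : AddSubgroup (ZMod n)) : IsAddCyclic (ZMod n ⧸ B) :=
  isAddCyclic_of_surjective (QuotientAddGroup.mk' B) (QuotientAddGroup.mk'_surjective B)

/-- the `d`-torsion subgroup of `ZMod n`. -/
def tors (n d : ℕ) : AddSubgroup (ZMod n) :=
  AddMonoidHom.ker (AddMonoidHom.mulLeft (d : ZMod n))

lemma mem_tors {n d : ℕ} {x : ZMod n} : x ∈ tors n d ↔ d • x = 0 := by
  simp [tors, AddMonoidHom.mem_ker, nsmul_eq_mul]

lemma range_mulLeft (n d : ℕ) [NeZero n] :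
    (AddMonoidHom.mulLeft (d : ZMod n)).range = AddSubgroup.zmultiples (d : ZMod n) := by
  ext x
  simp only [AddMonoidHom.mem_range, AddSubgroup.mem_zmultiples_iff, AddMonoidHom.coe_mulLeft]
  constructor
  · rintro ⟨y, rfl⟩
    exact ⟨(y.val : ℤ), by rw [zsmul_eq_mul]; push_cast; rw [ZMod.natCast_val, ZMod.cast_id]; ring⟩
  · rintro ⟨k, rfl⟩
    exact ⟨(k : ZMod n), by rw [zsmul_eq_mul]; push_cast; ring⟩

lemma card_tors (n d : ℕ) [NeZero n] : Nat.card (tors n d) = Nat.gcd d n := by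
  have h1 := AddSubgroup.card_eq_card_quotient_mul_card_addSubgroup
    (AddMonoidHom.ker (AddMonoidHom.mulLeft (d : ZMod n)))
  have h2 : Nat.card (ZMod n ⧸ AddMonoidHom.ker (AddMonoidHom.mulLeft (d : ZMod n)))
      = n / Nat.gcd n d := by
    rw [Nat.card_congr (QuotientAddGroup.quotientKerEquivRange _).toEquiv, range_mulLeft n d,
      Nat.card_zmultiples, ZMod.addOrderOf_coe d (NeZero.ne n)]
  rw [Nat.card_zmod, h2] at h1
  have hq : n / Nat.gcd n d ≠ 0 :=
    Nat.div_ne_zero_iff_of_dvd (Nat.gcd_dvd_left n d) |>.mpr ⟨NeZero.ne n, Nat.gcd_ne_zero_left (NeZero.ne n)⟩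
  have h3 : n = n / Nat.gcd n d * Nat.gcd n d := (Nat.div_mul_cancel (Nat.gcd_dvd_left n d)).symm
  have := Nat.eq_of_mul_eq_mul_left (Nat.pos_of_ne_zero hq) (h1.symm.trans h3)
  rw [tors, this, Nat.gcd_comm]

lemma card_subtype_nsmul (n d : ℕ) [NeZero n] :
    Nat.card {x : ZMod n // d • x = 0} = Nat.gcd d n := by
  rw [← card_tors n d]
  exact Nat.card_congr (Equiv.subtypeEquivRight fun x => mem_tors.symm)

lemma card_addHom_eq_gcd {A C : Type*} [AddCommGroup A] [AddCommGroup C] [Finite A] [Finite C]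
    (hA : IsAddCyclic A) (hC : IsAddCyclic C) :
    Nat.card (A →+ C) = Nat.gcd (Nat.card A) (Nat.card C) := by
  have hc : NeZero (Nat.card C) := ⟨Nat.card_pos.ne'⟩
  set a := Nat.card A with ha
  let e1 : ZMod a ≃+ A := zmodAddCyclicAddEquiv hA
  let e2 : ZMod (Nat.card C) ≃+ C := zmodAddCyclicAddEquiv hC
  let E1 : (A →+ C) ≃ (ZMod a →+ C) :=
    { toFun := fun f => f.comp e1.toAddMonoidHom
      invFun := fun g => g.comp e1.symm.toAddMonoidHom
      left_inv := fun f => by ext x; simp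
      right_inv := fun g => by ext x; simp }
  have hcond : ∀ f : ℤ →+ C, f ((a : ℕ) : ℤ) = 0 ↔ a • (zmultiplesHom C).symm f = 0 := by
    intro f
    rw [zmultiplesHom_symm_apply, ← natCast_zsmul, ← map_zsmul, zsmul_eq_mul, mul_one]
    norm_cast
  let E3 : (ZMod a →+ C) ≃ {x : C // a • x = 0} :=
    (ZMod.lift a).symm.trans (Equiv.subtypeEquiv (zmultiplesHom C).symm hcond)
  let E4 : {x : C // a • x = 0} ≃ {y : ZMod (Nat.card C) // a • y = 0} :=
    Equiv.subtypeEquiv e2.symm.toEquiv (by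
      intro x
      constructor
      · intro h
        show a • e2.symm x = 0
        rw [← map_nsmul, h, map_zero]
      · intro h
        have := congrArg e2 (show a • e2.symm x = 0 from h)
        rwa [← map_nsmul, AddEquiv.apply_symm_apply, map_zero] at this)
  rw [Nat.card_congr (E1.trans (E3.trans E4))]
  exact card_subtype_nsmul _ _

lemma card_dvd_of_le_zmod {n : ℕ} [NeZero n] (A : AddSubgroup (ZMod n)) :
    Nat.card A ∣ n := by
  have := AddSubgroup.card_addSubgroup_dvd_card A
  rwa [Nat.card_zmod] at this

lemma eq_tors_card {n : ℕ} [NeZero n] (A : AddSubgroup (ZMod n)) :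
    tors n (Nat.card A) = A := by
  symm
  have hle : A ≤ tors n (Nat.card A) := by
    intro x hx
    rw [mem_tors]
    have h1 : (Nat.card A) • (⟨x, hx⟩ : A) = 0 := card_nsmul_eq_zero'
    have h2 : ((Nat.card A • (⟨x, hx⟩ : A) : A) : ZMod n) = 0 := by rw [h1]; rfl
    exact_mod_cast h2
  refine AddSubgroup.eq_of_le_of_card_ge hle ?_
  rw [card_tors, Nat.gcd_eq_left (card_dvd_of_le_zmod A)]

lemma sum_over_subgroups {n : ℕ} [NeZero n] [Fintype (AddSubgroup (ZMod n))] (f : ℕ → ℕ) :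
    ∑ A : AddSubgroup (ZMod n), f (Nat.card A) = ∑ i ∈ n.divisors, f i := by
  refine Finset.sum_bij' (fun A _ => Nat.card A) (fun i _ => tors n i) ?_ ?_ ?_ ?_ ?_
  · intro A _
    exact Nat.mem_divisors.mpr ⟨card_dvd_of_le_zmod A, NeZero.ne n⟩
  · intro i _
    exact Finset.mem_univ _
  · intro A _
    exact eq_tors_card A
  · intro i hi
    show Nat.card (tors n i) = i
    rw [card_tors, Nat.gcd_eq_left (Nat.mem_divisors.mp hi).1]
  · intro A _
    rfl

lemma nat_card_sigma {ι : Type*} [Fintype ι] (f : ι → Type*) [∀ i, Finite (f i)] :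
    Nat.card (Σ i, f i) = ∑ i, Nat.card (f i) := by
  have (i : ι) : Fintype (f i) := Fintype.ofFinite _
  rw [Nat.card_eq_fintype_card, Fintype.card_sigma]
  exact Finset.sum_congr rfl fun i _ => (Nat.card_eq_fintype_card).symm

lemma card_quot_zmod (n : ℕ) [NeZero n] (B : AddSubgroup (ZMod n)) :
    Nat.card (ZMod n ⧸ B) = n / Nat.card B := by
  have h := AddSubgroup.card_eq_card_quotient_mul_card_addSubgroup B
  rw [Nat.card_zmod] at h
  have hb : 0 < Nat.card B := Nat.card_pos
  exact (Nat.div_eq_of_eq_mul_right hb (by linarith [h])).symm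

/-- The number of subgroups of `Z_m × Z_n` equals `∑_{i ∣ m} ∑_{j ∣ n} gcd(i,j)`. -/
theorem number_of_subgroups_rank_two (m n : ℕ) (hm : 0 < m) (hn : 0 < n) :
    Nat.card (AddSubgroup (ZMod m × ZMod n)) =
      ∑ i ∈ m.divisors, ∑ j ∈ n.divisors, Nat.gcd i j := by
  have hm' : NeZero m := ⟨hm.ne'⟩
  have hn' : NeZero n := ⟨hn.ne'⟩
  letI : Fintype (AddSubgroup (ZMod m)) := Fintype.ofFinite _
  letI : Fintype (AddSubgroup (ZMod n)) := Fintype.ofFinite _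
  rw [← Nat.card_congr (Equiv.ofBijective _ (mkH_bijective (M := ZMod m) (N := ZMod n)))]
  rw [nat_card_sigma]
  have step : ∀ A : AddSubgroup (ZMod m),
      Nat.card (Σ B : AddSubgroup (ZMod n), (A →+ ZMod n ⧸ B))
        = ∑ j ∈ n.divisors, Nat.gcd (Nat.card A) j := by
    intro A
    rw [nat_card_sigma]
    have h1 : ∀ B : AddSubgroup (ZMod n),
        Nat.card (A →+ ZMod n ⧸ B) = Nat.gcd (Nat.card A) (n / Nat.card B) := by
      intro B
      rw [card_addHom_eq_gcd inferInstance inferInstance, card_quot_zmod]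
    calc ∑ B : AddSubgroup (ZMod n), Nat.card (A →+ ZMod n ⧸ B)
        = ∑ B : AddSubgroup (ZMod n), Nat.gcd (Nat.card A) (n / Nat.card B) :=
          Finset.sum_congr rfl fun B _ => h1 B
      _ = ∑ j ∈ n.divisors, Nat.gcd (Nat.card A) (n / j) :=
          sum_over_subgroups (fun j => Nat.gcd (Nat.card A) (n / j))
      _ = ∑ j ∈ n.divisors, Nat.gcd (Nat.card A) j :=
          Nat.sum_div_divisors n (fun j => Nat.gcd (Nat.card A) j)
  calc ∑ A : AddSubgroup (ZMod m),
        Nat.card (Σ B : AddSubgroup (ZMod n), (A →+ ZMod n ⧸ B))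
      = ∑ A : AddSubgroup (ZMod m), ∑ j ∈ n.divisors, Nat.gcd (Nat.card A) j :=
        Finset.sum_congr rfl fun A _ => step A
    _ = ∑ i ∈ m.divisors, ∑ j ∈ n.divisors, Nat.gcd i j :=
        sum_over_subgroups (fun i => ∑ j ∈ n.divisors, Nat.gcd i j)
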